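/- The determinant of the Magnus matrix of any automorphism of the free group F_n lies in ±H₁: for φ ∈ Aut(F_n), det((∂φ(γ_j)/∂γ_i)_{ij} mod abelianization) = ±γ for some γ ∈ H₁ = ℤⁿ (a signed monomial in the Laurent polynomial ring ℤ[H₁]). -/

import Mathlib

/-- The Laurent polynomial ring `ℤ[H₁] = ℤ[γ₁^{±1}, …, γ_n^{±1}]`. -/
abbrev LaurentRing (n : ℕ) : Type := AddMonoidAlgebra ℤ (Fin n →₀ ℤ)

/-- The monomial `γ^x` attached to `x ∈ H₁ = ℤⁿ`. -/
noncomputable def monoR (n : ℕ) (x : Fin n →₀ ℤ) : LaurentRing n :=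
  AddMonoidAlgebra.single x 1

section TrivialUnits

variable {G : Type*} [AddCommGroup G] [LinearOrder G] [IsOrderedAddMonoid G]

private lemma mul_apply_max (p q : AddMonoidAlgebra ℤ G) {a b : G}
    (hb : b ∈ q.coeff.support)
    (hpa : ∀ x ∈ p.coeff.support, x ≤ a) (hqb : ∀ y ∈ q.coeff.support, y ≤ b) :
    (p * q).coeff (a + b) = p.coeff a * q.coeff b := by
  rw [AddMonoidAlgebra.coeff_mul, Finsupp.sum]
  by_cases ha : a ∈ p.coeff.support
  · rw [Finset.sum_eq_single_of_mem a ha ?_]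
    · rw [Finsupp.sum]
      rw [Finset.sum_eq_single_of_mem b hb ?_]
      · rw [if_pos rfl]
      · intro y hy hyb
        have : a + y < a + b := add_lt_add_right ((hqb y hy).lt_of_ne hyb) a
        rw [if_neg this.ne]
    · intro x hx hxa
      rw [Finsupp.sum]
      apply Finset.sum_eq_zero
      intro y hy
      have : x + y < a + b :=
        add_lt_add_of_lt_of_le ((hpa x hx).lt_of_ne hxa) (hqb y hy)
      rw [if_neg this.ne]
  · rw [Finsupp.notMem_support_iff.mp ha, zero_mul]
    apply Finset.sum_eq_zero
    intro x hx
    rw [Finsupp.sum]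
    apply Finset.sum_eq_zero
    intro y hy
    have hxa : x ≠ a := by rintro rfl; exact ha hx
    have : x + y < a + b :=
      add_lt_add_of_lt_of_le ((hpa x hx).lt_of_ne hxa) (hqb y hy)
    rw [if_neg this.ne]

private lemma mul_apply_min (p q : AddMonoidAlgebra ℤ G) {a b : G}
    (hb : b ∈ q.coeff.support)
    (hpa : ∀ x ∈ p.coeff.support, a ≤ x) (hqb : ∀ y ∈ q.coeff.support, b ≤ y) :
    (p * q).coeff (a + b) = p.coeff a * q.coeff b := by
  rw [AddMonoidAlgebra.coeff_mul, Finsupp.sum]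
  by_cases ha : a ∈ p.coeff.support
  · rw [Finset.sum_eq_single_of_mem a ha ?_]
    · rw [Finsupp.sum]
      rw [Finset.sum_eq_single_of_mem b hb ?_]
      · rw [if_pos rfl]
      · intro y hy hyb
        have : a + b < a + y := add_lt_add_right ((hqb y hy).lt_of_ne (Ne.symm hyb)) a
        rw [if_neg this.ne']
    · intro x hx hxa
      rw [Finsupp.sum]
      apply Finset.sum_eq_zero
      intro y hy
      have : a + b < x + y :=
        add_lt_add_of_lt_of_le ((hpa x hx).lt_of_ne (Ne.symm hxa)) (hqb y hy)
      rw [if_neg this.ne']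
  · rw [Finsupp.notMem_support_iff.mp ha, zero_mul]
    apply Finset.sum_eq_zero
    intro x hx
    rw [Finsupp.sum]
    apply Finset.sum_eq_zero
    intro y hy
    have hxa : x ≠ a := by rintro rfl; exact ha hx
    have : a + b < x + y :=
      add_lt_add_of_lt_of_le ((hpa x hx).lt_of_ne (Ne.symm hxa)) (hqb y hy)
    rw [if_neg this.ne']

private lemma one_apply' (x : G) :
    (1 : AddMonoidAlgebra ℤ G).coeff x = if x = 0 then 1 else 0 := by
  rw [AddMonoidAlgebra.one_def, AddMonoidAlgebra.coeff_single, Finsupp.single_apply]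
  simp [eq_comm]

/-- Units of `ℤ[G]` for a linearly ordered abelian group `G` are trivial. -/
private lemma unit_trivial (p q : AddMonoidAlgebra ℤ G) (h : p * q = 1) :
    ∃ a : G, p = AddMonoidAlgebra.single a 1 ∨ p = AddMonoidAlgebra.single a (-1) := by
  have hp : p ≠ 0 := by rintro rfl; rw [zero_mul] at h; exact one_ne_zero h.symm
  have hq : q ≠ 0 := by rintro rfl; rw [mul_zero] at h; exact one_ne_zero h.symm
  have hpN : p.coeff.support.Nonempty := Finsupp.support_nonempty_iff.mpr (mt AddMonoidAlgebra.coeff_eq_zero.mp hp)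
  have hqN : q.coeff.support.Nonempty := Finsupp.support_nonempty_iff.mpr (mt AddMonoidAlgebra.coeff_eq_zero.mp hq)
  set a1 := p.coeff.support.max' hpN with ha1
  set a0 := p.coeff.support.min' hpN with ha0
  set b1 := q.coeff.support.max' hqN with hb1
  set b0 := q.coeff.support.min' hqN with hb0
  have e1 : (p * q).coeff (a1 + b1) = p.coeff a1 * q.coeff b1 :=
    mul_apply_max p q (q.coeff.support.max'_mem hqN)
      (fun x hx => Finset.le_max' _ x hx) (fun y hy => Finset.le_max' _ y hy)
  have e0 : (p * q).coeff (a0 + b0) = p.coeff a0 * q.coeff b0 :=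
    mul_apply_min p q (q.coeff.support.min'_mem hqN)
      (fun x hx => Finset.min'_le _ x hx) (fun y hy => Finset.min'_le _ y hy)
  have pne : ∀ x ∈ p.coeff.support, ∀ y ∈ q.coeff.support, p.coeff x * q.coeff y ≠ 0 := fun x hx y hy =>
    mul_ne_zero (Finsupp.mem_support_iff.mp hx) (Finsupp.mem_support_iff.mp hy)
  have h1 : a1 + b1 = 0 := by
    by_contra hne
    rw [h, one_apply', if_neg hne] at e1
    exact pne _ (p.coeff.support.max'_mem hpN) _ (q.coeff.support.max'_mem hqN) e1.symm
  have h0 : a0 + b0 = 0 := by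
    by_contra hne
    rw [h, one_apply', if_neg hne] at e0
    exact pne _ (p.coeff.support.min'_mem hpN) _ (q.coeff.support.min'_mem hqN) e0.symm
  have haa : a0 = a1 := by
    by_contra hne
    have hlt : a0 < a1 :=
      (p.coeff.support.min'_le _ (p.coeff.support.max'_mem hpN)).lt_of_ne hne
    have hbb : b0 ≤ b1 := q.coeff.support.min'_le _ (q.coeff.support.max'_mem hqN)
    have : a0 + b0 < a1 + b1 := add_lt_add_of_lt_of_le hlt hbb
    rw [h0, h1] at this
    exact lt_irrefl _ this
  have hsub : p.coeff.support ⊆ {a1} := by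
    intro x hx
    rw [Finset.mem_singleton]
    exact le_antisymm (Finset.le_max' _ x hx) (haa ▸ Finset.min'_le _ x hx)
  have hp1 : p = AddMonoidAlgebra.single a1 (p.coeff a1) :=
    AddMonoidAlgebra.coeff_injective (Finsupp.support_subset_singleton.mp hsub)
  have hcoeff : p.coeff a1 * q.coeff b1 = 1 := by
    rw [← e1, h1, h, one_apply', if_pos rfl]
  rcases Int.isUnit_iff.mp (IsUnit.of_mul_eq_one _ hcoeff) with hc | hc
  · exact ⟨a1, Or.inl (by rw [hp1, hc])⟩
  · exact ⟨a1, Or.inr (by rw [hp1, hc])⟩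

end TrivialUnits

/-- `toLex` as an additive equivalence on `Fin n →₀ ℤ`. -/
private def lexAddEquiv (n : ℕ) : (Fin n →₀ ℤ) ≃+ Lex (Fin n →₀ ℤ) :=
  { toLex (α := Fin n →₀ ℤ) with map_add' := fun _ _ => rfl }

/-- Units of the Laurent ring are signed monomials. -/
private lemma laurent_unit_trivial {n : ℕ} (p q : LaurentRing n) (h : p * q = 1) :
    ∃ x : Fin n →₀ ℤ, p = monoR n x ∨ p = -monoR n x := by
  let Φ := AddMonoidAlgebra.domCongr ℤ ℤ (lexAddEquiv n)
  have hΦ : Φ p * Φ q = 1 := by rw [← map_mul, h, map_one]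
  obtain ⟨a, ha⟩ := unit_trivial (Φ p) (Φ q) hΦ
  refine ⟨(lexAddEquiv n).symm a, ?_⟩
  rcases ha with ha | ha
  · left
    have := congrArg Φ.symm ha
    rwa [AlgEquiv.symm_apply_apply, AddMonoidAlgebra.domCongr_symm,
      AddMonoidAlgebra.domCongr_single] at this
  · right
    have := congrArg Φ.symm ha
    rw [AlgEquiv.symm_apply_apply, AddMonoidAlgebra.domCongr_symm,
      AddMonoidAlgebra.domCongr_single] at this
    rw [this, monoR, ← AddMonoidAlgebra.single_neg]

theorem magnus_det_of_aut_is_signed_monomial (n : ℕ)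
    (ε : FreeGroup (Fin n) →* (LaurentRing n)ˣ)
    (hε : ∀ j : Fin n, (ε (FreeGroup.of j) : LaurentRing n) = monoR n (Finsupp.single j 1))
    (d : Fin n → FreeGroup (Fin n) → LaurentRing n)
    (hbase : ∀ i j : Fin n, d i (FreeGroup.of j) = if i = j then 1 else 0)
    (hprod : ∀ (i : Fin n) (u v : FreeGroup (Fin n)),
      d i (u * v) = d i u + (ε u : LaurentRing n) * d i v)
    (φ : FreeGroup (Fin n) ≃* FreeGroup (Fin n)) :
    ∃ x : Fin n →₀ ℤ,
      (Matrix.of fun i j : Fin n => d i (φ (FreeGroup.of j))).det = monoR n x ∨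
      (Matrix.of fun i j : Fin n => d i (φ (FreeGroup.of j))).det = -monoR n x := by
  classical
  -- basic consequences of the product rule
  have d_one : ∀ i, d i 1 = 0 := by
    intro i
    have h := hprod i 1 1
    rw [one_mul, map_one, Units.val_one, one_mul] at h
    exact (left_eq_add.mp h)
  have d_inv : ∀ (i : Fin n) (u : FreeGroup (Fin n)),
      d i u⁻¹ = -((((ε u)⁻¹ : (LaurentRing n)ˣ) : LaurentRing n) * d i u) := by
    intro i u
    have h := hprod i u u⁻¹
    rw [mul_inv_cancel, d_one] at h
    have h2 : (ε u : LaurentRing n) * d i u⁻¹ = -d i u := by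
      rw [eq_neg_iff_add_eq_zero, add_comm]
      exact h.symm
    calc d i u⁻¹ = (((ε u)⁻¹ : (LaurentRing n)ˣ) : LaurentRing n)
          * ((ε u : LaurentRing n) * d i u⁻¹) := (Units.inv_mul_cancel_left _ _).symm
      _ = -((((ε u)⁻¹ : (LaurentRing n)ˣ) : LaurentRing n) * d i u) := by
          rw [h2, mul_neg]
  -- the ring endomorphism of ℤ[H₁] induced by φ
  let u : Fin n → (LaurentRing n)ˣ := fun k => ε (φ (FreeGroup.of k))
  let g : Multiplicative (Fin n →₀ ℤ) →* (LaurentRing n)ˣ :=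
    AddMonoidHom.toMultiplicativeLeft
      (Finsupp.liftAddHom fun k =>
        zmultiplesHom (Additive (LaurentRing n)ˣ) (Additive.ofMul (u k)))
  let barφ : LaurentRing n →ₐ[ℤ] LaurentRing n :=
    AddMonoidAlgebra.lift ℤ (LaurentRing n) (Fin n →₀ ℤ)
      ((Units.coeHom (LaurentRing n)).comp g)
  have hbar1 : ∀ j : Fin n,
      barφ (monoR n (Finsupp.single j 1)) = ((u j : LaurentRing n)) := by
    intro j
    show AddMonoidAlgebra.lift ℤ (LaurentRing n) (Fin n →₀ ℤ)
      ((Units.coeHom (LaurentRing n)).comp g)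
      (AddMonoidAlgebra.single (Finsupp.single j 1) 1) = _
    rw [AddMonoidAlgebra.lift_single, one_smul]
    show ((g (Multiplicative.ofAdd (Finsupp.single j 1)) : (LaurentRing n)ˣ)
       : LaurentRing n) = _
    congr 1
    show Additive.toMul ((Finsupp.liftAddHom fun k =>
        zmultiplesHom (Additive (LaurentRing n)ˣ) (Additive.ofMul (u k)))
        (Finsupp.single j 1)) = u j
    rw [Finsupp.liftAddHom_apply_single, zmultiplesHom_apply, one_zsmul]
    rfl
  -- barφ intertwines ε and ε ∘ φ
  have hbar : ∀ w : FreeGroup (Fin n),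
      barφ ((ε w : LaurentRing n)) = ((ε (φ w) : LaurentRing n)) := by
    intro w
    induction w using FreeGroup.induction_on with
    | C1 => simp only [map_one, Units.val_one]
    | of j =>
        show barφ ((ε (FreeGroup.of j) : LaurentRing n)) = ((ε (φ (FreeGroup.of j)) : LaurentRing n))
        rw [hε j, hbar1 j]
    | inv_of j ih =>
        show barφ ((ε (FreeGroup.of j)⁻¹ : LaurentRing n)) = ((ε (φ (FreeGroup.of j)⁻¹) : LaurentRing n))
        replace ih : barφ ((ε (FreeGroup.of j) : LaurentRing n)) = ((ε (φ (FreeGroup.of j)) : LaurentRing n)) := ih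
        have h1 : barφ ((ε (FreeGroup.of j) : LaurentRing n))
            * barφ ((ε (FreeGroup.of j)⁻¹ : LaurentRing n)) = 1 := by
          rw [← map_mul, ← Units.val_mul, ← map_mul, mul_inv_cancel, map_one,
            Units.val_one, map_one]
        have h2 : ((ε (φ (FreeGroup.of j)) : LaurentRing n))
            * ((ε (φ (FreeGroup.of j)⁻¹) : LaurentRing n)) = 1 := by
          rw [← Units.val_mul, ← map_mul, ← map_mul, mul_inv_cancel, map_one,
            map_one, Units.val_one]
        rw [ih] at h1
        calc barφ ((ε (FreeGroup.of j)⁻¹ : LaurentRing n))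
            = (((ε (φ (FreeGroup.of j))) : LaurentRing n)
                * barφ ((ε (FreeGroup.of j)⁻¹ : LaurentRing n)))
                * ((ε (φ (FreeGroup.of j)⁻¹) : LaurentRing n)) := by
              rw [mul_comm ((ε (φ (FreeGroup.of j))) : LaurentRing n), mul_assoc, h2,
                mul_one]
          _ = ((ε (φ (FreeGroup.of j)⁻¹) : LaurentRing n)) := by rw [h1, one_mul]
    | mul x y ihx ihy =>
        simp only [map_mul, Units.val_mul, ihx, ihy]
  -- the chain rule
  have chain : ∀ (w : FreeGroup (Fin n)) (i : Fin n),
      d i (φ w) = ∑ k, barφ (d k w) * d i (φ (FreeGroup.of k)) := by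
    intro w
    induction w using FreeGroup.induction_on with
    | C1 =>
        intro i
        rw [map_one, d_one]
        apply (Finset.sum_eq_zero ?_).symm
        intro k _
        rw [d_one, map_zero, zero_mul]
    | of j =>
        intro i
        show d i (φ (FreeGroup.of j)) = ∑ k, barφ (d k (FreeGroup.of j)) * d i (φ (FreeGroup.of k))
        rw [Finset.sum_eq_single_of_mem j (Finset.mem_univ j) ?_]
        · rw [hbase, if_pos rfl, map_one, one_mul]
        · intro k _ hkj
          rw [hbase, if_neg hkj, map_zero, zero_mul]
    | inv_of x ih =>
        intro i
        show d i (φ (FreeGroup.of x)⁻¹)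
          = ∑ k, barφ (d k (FreeGroup.of x)⁻¹) * d i (φ (FreeGroup.of k))
        replace ih : d i (φ (FreeGroup.of x))
            = ∑ k, barφ (d k (FreeGroup.of x)) * d i (φ (FreeGroup.of k)) := ih i
        rw [map_inv, d_inv, ih]
        rw [Finset.mul_sum, neg_eq_iff_eq_neg, ← Finset.sum_neg_distrib]
        apply Finset.sum_congr rfl
        intro k _
        rw [d_inv, map_neg, map_mul, neg_mul, neg_neg, ← mul_assoc]
        congr 2
        have : barφ ((((ε (FreeGroup.of x))⁻¹ : (LaurentRing n)ˣ) : LaurentRing n))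
            = (((ε (φ (FreeGroup.of x)))⁻¹ : (LaurentRing n)ˣ) : LaurentRing n) := by
          have e1 : (((ε (FreeGroup.of x))⁻¹ : (LaurentRing n)ˣ) : LaurentRing n)
              = ((ε (FreeGroup.of x)⁻¹ : LaurentRing n)) := by rw [map_inv]
          have e2 : (((ε (φ (FreeGroup.of x)))⁻¹ : (LaurentRing n)ˣ) : LaurentRing n)
              = ((ε (φ (FreeGroup.of x)⁻¹) : LaurentRing n)) := by
            rw [map_inv φ, map_inv ε]
          rw [e1, e2, hbar]
        rw [this]
    | mul v w ihv ihw =>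
        intro i
        rw [map_mul, hprod, ihv i, ihw i, Finset.mul_sum, ← Finset.sum_add_distrib]
        apply Finset.sum_congr rfl
        intro k _
        rw [hprod, map_add, map_mul, hbar, add_mul, mul_assoc]
  -- the Magnus matrix is invertible
  set M : Matrix (Fin n) (Fin n) (LaurentRing n) :=
    Matrix.of fun i j : Fin n => d i (φ (FreeGroup.of j)) with hM
  set N : Matrix (Fin n) (Fin n) (LaurentRing n) :=
    Matrix.of (fun k j : Fin n => barφ (d k (φ.symm (FreeGroup.of j)))) with hN
  have hMN : M * N = 1 := by
    apply Matrix.ext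
    intro i j
    rw [Matrix.mul_apply, Matrix.one_apply]
    simp only [hM, hN, Matrix.of_apply]
    have hc := chain (φ.symm (FreeGroup.of j)) i
    rw [MulEquiv.apply_symm_apply, hbase] at hc
    rw [hc]
    exact Finset.sum_congr rfl fun k _ => mul_comm _ _
  have hdet : M.det * N.det = 1 := by rw [← Matrix.det_mul, hMN, Matrix.det_one]
  obtain ⟨x, hx⟩ := laurent_unit_trivial M.det N.det hdet
  exact ⟨x, hx⟩
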